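/- Suppose the partial sums Σ_{t=0}^{T} (P^t − eπᵀ) converge (entrywise, equivalently in the topology of n×n real matrices) to a matrix Z₀ as T → ∞. Then the matrix I − P + JΠ is invertible and Z₀ = (I − P + JΠ)⁻¹ − JΠ. -/

import Mathlib

open Matrix Finset Filter Topology

/-- The all-ones n×n matrix `J = e eᵀ`. -/
noncomputable def Jmat (n : ℕ) : Matrix (Fin n) (Fin n) ℝ :=
  Matrix.of fun _ _ => (1 : ℝ)

/-- `Π^{1/2}`: the diagonal matrix with entries `√(π_i)`. -/
noncomputable def Pih (n : ℕ) (pv : Fin n → ℝ) : Matrix (Fin n) (Fin n) ℝ :=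
  Matrix.diagonal fun i => Real.sqrt (pv i)

/-- `Π^{-1/2}`: the diagonal matrix with entries `1/√(π_i)`. -/
noncomputable def Pinvh (n : ℕ) (pv : Fin n → ℝ) : Matrix (Fin n) (Fin n) ℝ :=
  Matrix.diagonal fun i => (Real.sqrt (pv i))⁻¹

/-- if the partial sums `Σ_{t=0}^{T} (P^t − eπᵀ)` converge to `Z₀`, then
`I − P + JΠ` is invertible and `Z₀ = (I − P + JΠ)⁻¹ − JΠ`. -/
theorem fundamental_matrix_series {n : ℕ} (hn : 1 ≤ n)
    (P : Matrix (Fin n) (Fin n) ℝ)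
    (hP_nonneg : ∀ i j, 0 ≤ P i j) (hP_row : ∀ i, ∑ j, P i j = 1)
    (pv : Fin n → ℝ) (hpv_pos : ∀ i, 0 < pv i) (hpv_sum : ∑ i, pv i = 1)
    (hpv_stat : Matrix.vecMul pv P = pv)
    (Z₀ : Matrix (Fin n) (Fin n) ℝ)
    (hconv : Tendsto
      (fun T : ℕ => ∑ t ∈ Finset.range (T + 1), (P ^ t - Matrix.of fun _ j => pv j))
      atTop (𝓝 Z₀)) :
    IsUnit (1 - P + Jmat n * Matrix.diagonal pv) ∧
      Z₀ = (1 - P + Jmat n * Matrix.diagonal pv)⁻¹ - Jmat n * Matrix.diagonal pv := by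
  set E : Matrix (Fin n) (Fin n) ℝ := Matrix.of fun _ j => pv j with hE
  have hJE : Jmat n * Matrix.diagonal pv = E := by
    ext i j
    simp [Jmat, Matrix.mul_apply, Matrix.diagonal, hE]
  rw [hJE]
  set A : Matrix (Fin n) (Fin n) ℝ := 1 - P + E with hA
  have hPE : P * E = E := by
    ext i j
    simp [Matrix.mul_apply, hE, ← Finset.sum_mul, hP_row i]
  have hEP : E * P = E := by
    ext i j
    have := congrFun hpv_stat j
    simpa [Matrix.mul_apply, hE, Matrix.vecMul, dotProduct] using this
  have hEE : E * E = E := by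
    ext i j
    simp [Matrix.mul_apply, hE, ← Finset.sum_mul, hpv_sum]
  have hPtE : ∀ t : ℕ, P ^ t * E = E := by
    intro t
    induction t with
    | zero => simp
    | succ t ih => rw [pow_succ, Matrix.mul_assoc, hPE, ih]
  -- key identity : A * S_T = 1 - P^(T+1)
  have hkey : ∀ T : ℕ,
      A * (∑ t ∈ Finset.range (T + 1), (P ^ t - E)) = 1 - P ^ (T + 1) := by
    intro T
    rw [Finset.mul_sum]
    have hterm : ∀ t : ℕ, A * (P ^ t - E) = P ^ t - P ^ (t + 1) := by
      intro t
      have hEPt : E * P ^ t = E := by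
        induction t with
        | zero => simp
        | succ t ih => rw [pow_succ, ← Matrix.mul_assoc, ih, hEP]
      rw [hA]
      rw [Matrix.mul_sub, Matrix.add_mul, Matrix.add_mul, Matrix.sub_mul,
        Matrix.sub_mul, Matrix.one_mul, Matrix.one_mul, hEPt, hPE, hEE,
        ← pow_succ']
      abel
    calc (∑ t ∈ Finset.range (T + 1), A * (P ^ t - E))
        = ∑ t ∈ Finset.range (T + 1), (P ^ t - P ^ (t + 1)) := by
          exact Finset.sum_congr rfl fun t _ => hterm t
      _ = P ^ 0 - P ^ (T + 1) := Finset.sum_range_sub' (fun t => P ^ t) (T + 1)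
      _ = 1 - P ^ (T + 1) := by rw [pow_zero]
  -- P^(T+1) - E → 0
  have hdiff : Tendsto (fun T : ℕ => P ^ (T + 1) - E) atTop (𝓝 0) := by
    have h1 : Tendsto (fun T : ℕ =>
        (∑ t ∈ Finset.range (T + 1 + 1), (P ^ t - E)) -
        (∑ t ∈ Finset.range (T + 1), (P ^ t - E))) atTop (𝓝 (Z₀ - Z₀)) :=
      (hconv.comp (tendsto_add_atTop_nat 1)).sub hconv
    rw [sub_self] at h1
    convert h1 using 2 with T
    rw [Finset.sum_range_succ]
    abel
  have hPt : Tendsto (fun T : ℕ => P ^ (T + 1)) atTop (𝓝 E) := by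
    have := hdiff.add_const E
    simpa using this
  -- A * Z₀ = 1 - E
  have hAZ : A * Z₀ = 1 - E := by
    have h1 : Tendsto (fun T : ℕ =>
        A * (∑ t ∈ Finset.range (T + 1), (P ^ t - E))) atTop (𝓝 (A * Z₀)) :=
      hconv.const_mul A
    have h2 : Tendsto (fun T : ℕ =>
        A * (∑ t ∈ Finset.range (T + 1), (P ^ t - E))) atTop (𝓝 (1 - E)) := by
      simp only [hkey]
      exact tendsto_const_nhds.sub hPt
    exact tendsto_nhds_unique h1 h2
  -- A * (Z₀ + E) = 1
  have hAE : A * E = E := by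
    rw [hA, Matrix.add_mul, Matrix.sub_mul, Matrix.one_mul, hPE, hEE]
    abel
  have hmain : A * (Z₀ + E) = 1 := by
    rw [Matrix.mul_add, hAZ, hAE]
    abel
  refine ⟨(Matrix.isUnit_iff_isUnit_det _).mpr (Matrix.isUnit_det_of_right_inverse hmain), ?_⟩
  rw [Matrix.inv_eq_right_inv hmain]
  abel
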